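/- Let p, q : {0,1,...,n} → ℝ≥0 be probability mass functions, and define the coupling π* via π*(x,x') = F(x,x') − F(x−1,x') − F(x,x'−1) + F(x−1,x'−1) with F(x,x') = min(∑_{k≤x} p(k), ∑_{k≤x'} q(k)) and the convention F(−1,·)=F(·,−1)=0. Then π* is a valid coupling of p and q: π*(x,x') ≥ 0 for all x, x', ∑_{x'} π*(x,x') = p(x) for all x, and ∑_{x} π*(x,x') = q(x') for all x'. -/

import Mathlib

private lemma min_super {a a' b b' : ℝ} (ha : a' ≤ a) (hb : b' ≤ b) :
    min a' b + min a b' ≤ min a b + min a' b' := by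
  simp only [min_def]; split_ifs <;> linarith

private lemma tele (g : ℤ → ℝ) (n : ℤ) (hn : 0 ≤ n) :
    ∑ x ∈ Finset.Icc 0 n, (g x - g (x - 1)) = g n - g (-1) := by
  refine Int.le_induction (motive := fun k _ => ∑ x ∈ Finset.Icc 0 k, (g x - g (x - 1)) = g k - g (-1)) ?_ ?_ n hn
  · norm_num
  · intro m hm ih
    have h : Finset.Icc (0:ℤ) (m+1) = insert (m+1) (Finset.Icc 0 m) := by
      ext i; simp; omega
    rw [h, Finset.sum_insert (by simp)]
    have h2 : m + 1 - 1 = m := by ring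
    rw [h2, ih]; ring

private lemma mono_sum (n : ℤ) (p : ℤ → ℝ) (hp : ∀ k ∈ Finset.Icc 0 n, 0 ≤ p k)
    {x y : ℤ} (hxy : x ≤ y) (hyn : y ≤ n) :
    ∑ k ∈ Finset.Icc 0 x, p k ≤ ∑ k ∈ Finset.Icc 0 y, p k := by
  apply Finset.sum_le_sum_of_subset_of_nonneg
  · apply Finset.Icc_subset_Icc_right hxy
  · intro i hi _
    exact hp i (Finset.mem_Icc.2 ⟨(Finset.mem_Icc.1 hi).1, le_trans (Finset.mem_Icc.1 hi).2 hyn⟩)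

theorem kantorovich_construction_is_coupling
    (n : ℤ) (hn : 0 ≤ n) (p q : ℤ → ℝ)
    (hp : ∀ k ∈ Finset.Icc 0 n, 0 ≤ p k) (hp1 : ∑ k ∈ Finset.Icc 0 n, p k = 1)
    (hq : ∀ k ∈ Finset.Icc 0 n, 0 ≤ q k) (hq1 : ∑ k ∈ Finset.Icc 0 n, q k = 1)
    (F : ℤ → ℤ → ℝ)
    (hF : F = fun x x' => min (∑ k ∈ Finset.Icc 0 x, p k) (∑ k ∈ Finset.Icc 0 x', q k))
    (πs : ℤ → ℤ → ℝ)
    (hπs : πs = fun x x' => F x x' - F (x - 1) x' - F x (x' - 1) + F (x - 1) (x' - 1)) :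
    (∀ x ∈ Finset.Icc 0 n, ∀ x' ∈ Finset.Icc 0 n, 0 ≤ πs x x') ∧
    (∀ x ∈ Finset.Icc 0 n, ∑ x' ∈ Finset.Icc 0 n, πs x x' = p x) ∧
    (∀ x' ∈ Finset.Icc 0 n, ∑ x ∈ Finset.Icc 0 n, πs x x' = q x') := by
  set P : ℤ → ℝ := fun x => ∑ k ∈ Finset.Icc 0 x, p k with hP
  set Q : ℤ → ℝ := fun x => ∑ k ∈ Finset.Icc 0 x, q k with hQ
  have hPm : ∀ {x y : ℤ}, x ≤ y → y ≤ n → P x ≤ P y := fun hxy hyn => mono_sum n p hp hxy hyn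
  have hQm : ∀ {x y : ℤ}, x ≤ y → y ≤ n → Q x ≤ Q y := fun hxy hyn => mono_sum n q hq hxy hyn
  have hPneg : P (-1) = 0 := by simp [hP]
  have hQneg : Q (-1) = 0 := by simp [hQ]
  have hP0 : ∀ x : ℤ, x ≤ n → 0 ≤ P x := by
    intro x hx
    rcases le_or_gt 0 x with h | h
    · calc (0:ℝ) = P (-1) := hPneg.symm
        _ ≤ P x := hPm (by omega) hx
    · have : Finset.Icc (0:ℤ) x = ∅ := by simp; omega
      simp [hP, this]
  have hQ0 : ∀ x : ℤ, x ≤ n → 0 ≤ Q x := by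
    intro x hx
    rcases le_or_gt 0 x with h | h
    · calc (0:ℝ) = Q (-1) := hQneg.symm
        _ ≤ Q x := hQm (by omega) hx
    · have : Finset.Icc (0:ℤ) x = ∅ := by simp; omega
      simp [hQ, this]
  have hP1 : ∀ x : ℤ, x ≤ n → P x ≤ 1 := fun x hx => hp1 ▸ hPm hx le_rfl
  have hQ1 : ∀ x : ℤ, x ≤ n → Q x ≤ 1 := fun x hx => hq1 ▸ hQm hx le_rfl
  have hPstep : ∀ x : ℤ, 0 ≤ x → P x - P (x - 1) = p x := by
    intro x hx
    have h : Finset.Icc (0:ℤ) x = insert x (Finset.Icc 0 (x-1)) := by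
      ext i; simp; omega
    simp only [hP]
    rw [h, Finset.sum_insert (by simp)]; ring
  have hQstep : ∀ x : ℤ, 0 ≤ x → Q x - Q (x - 1) = q x := by
    intro x hx
    have h : Finset.Icc (0:ℤ) x = insert x (Finset.Icc 0 (x-1)) := by
      ext i; simp; omega
    simp only [hQ]
    rw [h, Finset.sum_insert (by simp)]; ring
  have hFm : ∀ x x', F x x' = min (P x) (Q x') := by intro x x'; rw [hF]
  refine ⟨?_, ?_, ?_⟩
  · intro x hx x' hx'
    simp only [Finset.mem_Icc] at hx hx'
    have h1 : P (x-1) ≤ P x := hPm (by omega) hx.2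
    have h2 : Q (x'-1) ≤ Q x' := hQm (by omega) hx'.2
    have := min_super h1 h2
    simp only [hπs, hFm]
    linarith
  · intro x hx
    simp only [Finset.mem_Icc] at hx
    have : ∀ x', πs x x' = (fun y => F x y - F (x-1) y) x' - (fun y => F x y - F (x-1) y) (x'-1) := by
      intro x'; simp only [hπs]; ring
    calc ∑ x' ∈ Finset.Icc 0 n, πs x x'
        = ∑ x' ∈ Finset.Icc 0 n, ((fun y => F x y - F (x-1) y) x' - (fun y => F x y - F (x-1) y) (x'-1)) := by
          exact Finset.sum_congr rfl fun x' _ => this x'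
      _ = (F x n - F (x-1) n) - (F x (-1) - F (x-1) (-1)) := by
          rw [tele (fun y => F x y - F (x-1) y) n hn]
      _ = p x := by
          simp only [hFm, hQneg]
          have hQn : Q n = 1 := hq1
          rw [min_eq_left (le_of_le_of_eq (hP1 x hx.2) hQn.symm),
              min_eq_left (le_of_le_of_eq (hP1 (x-1) (by omega)) hQn.symm),
              min_eq_right (hP0 x hx.2), min_eq_right (hP0 (x-1) (by omega))]
          have := hPstep x hx.1
          linarith
  · intro x' hx'
    simp only [Finset.mem_Icc] at hx'
    have : ∀ x, πs x x' = (fun y => F y x' - F y (x'-1)) x - (fun y => F y x' - F y (x'-1)) (x-1) := by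
      intro x; simp only [hπs]; ring
    calc ∑ x ∈ Finset.Icc 0 n, πs x x'
        = ∑ x ∈ Finset.Icc 0 n, ((fun y => F y x' - F y (x'-1)) x - (fun y => F y x' - F y (x'-1)) (x-1)) := by
          exact Finset.sum_congr rfl fun x _ => this x
      _ = (F n x' - F n (x'-1)) - (F (-1) x' - F (-1) (x'-1)) := by
          rw [tele (fun y => F y x' - F y (x'-1)) n hn]
      _ = q x' := by
          simp only [hFm, hPneg]
          have hPn : P n = 1 := hp1
          rw [min_eq_right (le_of_le_of_eq (hQ1 x' hx'.2) hPn.symm),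
              min_eq_right (le_of_le_of_eq (hQ1 (x'-1) (by omega)) hPn.symm),
              min_eq_left (hQ0 x' hx'.2), min_eq_left (hQ0 (x'-1) (by omega))]
          have := hQstep x' hx'.1
          linarith
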